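/- Assume 3b ∈ Δ and φ(3b) = 0. Then for every 2-cocycle α_λ(·,·) on CL(b,φ) there exist an additive group homomorphism g : Δ → ℂ with g(3b) = 0 and a function Φ : Δ → ℂ such that for all α, β ∈ Δ: α_λ(x_α, x_β) = (λ(α+β+2b) + B(α,β)) Φ(α+β) + δ_{α+β,−3b} g(α), where δ_{α+β,−3b} equals 1 if α+β = −3b and 0 otherwise. -/

import Mathlib

open Polynomial

lemma coeff_comp_neg_X (p : ℂ[X]) (j : ℕ) :
    (p.comp (-X)).coeff j = (-1)^j * p.coeff j := by
  induction p using Polynomial.induction_on' with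
  | add p q hp hq => simp [add_comp, hp, hq, mul_add]
  | monomial n a =>
      rw [monomial_comp, neg_pow,
        show ((-1 : ℂ[X])^n * X^n) = C ((-1)^n) * X^n by rw [← C_1, ← C_neg, ← C_pow],
        show C a * (C ((-1)^n) * X^n) = C (a * (-1)^n) * X^n by rw [← mul_assoc, ← C_mul],
        coeff_C_mul, coeff_X_pow, coeff_monomial]
      by_cases h : j = n
      · subst h; simp; ring
      · rw [if_neg h, if_neg (fun hh => h hh.symm)]; simp

lemma coeff_linear_hi {a c : ℂ} {j : ℕ} (h1 : j ≠ 0) (h2 : j ≠ 1) :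
    (C a + C c * X).coeff j = 0 := by
  simp [coeff_add, coeff_C, h1, coeff_C_mul, coeff_X, h2, Ne.symm h2]

lemma coeff_linear_mul (a c : ℂ) (p : ℂ[X]) (i : ℕ) :
    ((C a + C c * X) * p).coeff (i+1) = a * p.coeff (i+1) + c * p.coeff i := by
  rw [add_mul, coeff_add, coeff_C_mul, mul_assoc, coeff_C_mul, coeff_X_mul]

lemma eval0_d_linear_mul (a c : ℂ) (P : ℂ[X]) :
    Polynomial.eval 0 (derivative ((C a + C c * X) * P))
      = c * P.eval 0 + a * (derivative P).eval 0 := by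
  simp [derivative_mul, eval_add, eval_mul]

lemma eval0_dd_linear_mul (a c : ℂ) (P : ℂ[X]) :
    Polynomial.eval 0 (derivative (derivative ((C a + C c * X) * P)))
      = 2 * c * (derivative P).eval 0 + a * (derivative (derivative P)).eval 0 := by
  simp [derivative_mul, eval_add, eval_mul]
  ring

lemma derivative_comp_neg_X (k : ℂ[X]) :
    derivative (k.comp (-X)) = -((derivative k).comp (-X)) := by
  rw [derivative_comp]; simp

lemma derivative_taylor (l : ℂ) (f : ℂ[X]) :
    derivative ((taylor l) f) = (taylor l) (derivative f) := by
  rw [taylor_apply, taylor_apply, derivative_comp]; simp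
lemma degree_aux {b w v u d₁ d₂ d₃ : ℂ} {f k : Polynomial ℂ}
    (hU : ∀ l m : ℂ,
      (b*l + w*m + d₁) * f.eval l + (v*m + u*l + d₂) * k.eval (-m)
        = (b*l - v*m + d₃) * f.eval (l+m))
    (hn : 2 ≤ f.natDegree) :
    w + v = b * (f.natDegree : ℂ) ∧
      (3 ≤ f.natDegree → 2 * v = b * ((f.natDegree : ℂ) - 1)) := by
  obtain ⟨m0, hm0⟩ : ∃ m0, f.natDegree = m0 + 2 := ⟨f.natDegree - 2, by omega⟩
  have hf0 : f ≠ 0 := by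
    intro h; rw [h, natDegree_zero] at hn; omega
  have ha : f.coeff f.natDegree ≠ 0 := leadingCoeff_ne_zero.mpr hf0
  have htop : f.coeff (f.natDegree + 1) = 0 :=
    coeff_eq_zero_of_natDegree_lt (by omega)
  -- polynomial identity in m, for each l
  have hpoly : ∀ l : ℂ,
      (C (b*l + d₁) + C w * X) * C (f.eval l)
        + (C (u*l + d₂) + C v * X) * (k.comp (-X))
      = (C (b*l + d₃) + C (-v) * X) * ((taylor l) f) := by
    intro l
    apply Polynomial.funext; intro m
    simp only [eval_add, eval_mul, eval_C, eval_X, eval_comp, eval_neg, taylor_eval]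
    rw [show m + l = l + m by ring]
    linear_combination hU l m
  set k0 : ℂ := k.eval 0 with hk0def
  set k1 : ℂ := (derivative k).eval 0 with hk1def
  set k2 : ℂ := (derivative (derivative k)).eval 0 with hk2def
  have hD1 : ∀ l : ℂ,
      w * f.eval l + (v * k0 - (u*l + d₂) * k1)
        = (-v) * f.eval l + (b*l + d₃) * (derivative f).eval l := by
    intro l
    have h := congrArg (fun p => Polynomial.eval 0 (derivative p)) (hpoly l)
    simp only [derivative_add, eval_add] at h
    rw [eval0_d_linear_mul, eval0_d_linear_mul, eval0_d_linear_mul] at h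
    simp only [derivative_C, eval_zero, eval_comp, eval_neg, eval_X, neg_zero,
      derivative_comp_neg_X, derivative_taylor, taylor_eval, zero_add, eval_C] at h
    rw [← hk0def, ← hk1def] at h
    linear_combination h
  have hD2 : ∀ l : ℂ,
      ((u*l + d₂) * k2 - 2 * v * k1)
        = (-2) * v * (derivative f).eval l
          + (b*l + d₃) * (derivative (derivative f)).eval l := by
    intro l
    have h := congrArg (fun p => Polynomial.eval 0 (derivative (derivative p))) (hpoly l)
    simp only [derivative_add, eval_add] at h
    rw [eval0_dd_linear_mul, eval0_dd_linear_mul, eval0_dd_linear_mul] at h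
    simp only [derivative_C, eval_zero, derivative_zero, eval_comp, eval_neg, eval_X, neg_zero,
      derivative_comp_neg_X, derivative_neg, derivative_taylor, taylor_eval, zero_add,
      eval_C, eval_neg] at h
    rw [← hk1def, ← hk2def] at h
    linear_combination h
  constructor
  · -- first conclusion, coefficient natDegree of hJ1
    have hJ1 : (C (v * k0 - d₂ * k1) + C (-(u * k1)) * X) + C w * f
        = C (-v) * f + (C d₃ + C b * X) * derivative f := by
      apply Polynomial.funext; intro l
      simp only [eval_add, eval_mul, eval_C, eval_X]
      linear_combination hD1 l
    have hcoeff1 := congrArg (fun p => Polynomial.coeff p (m0 + 2)) hJ1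
    simp only [coeff_add, coeff_C_mul] at hcoeff1
    rw [coeff_C, if_neg (by omega), coeff_X, if_neg (by omega),
      show m0 + 2 = (m0 + 1) + 1 by omega, coeff_linear_mul] at hcoeff1
    simp only [coeff_derivative] at hcoeff1
    rw [show m0 + 1 + 1 + 1 = f.natDegree + 1 by omega, htop,
      show m0 + 1 + 1 = f.natDegree by omega] at hcoeff1
    have hcast : ((m0 + 1 : ℕ) : ℂ) + 1 = (f.natDegree : ℂ) := by
      rw [hm0]; push_cast; ring
    rw [hcast] at hcoeff1
    apply mul_right_cancel₀ ha
    linear_combination hcoeff1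
  · -- second conclusion
    intro hn3
    obtain ⟨m1, hm1⟩ : ∃ m1, m0 = m1 + 1 := ⟨m0 - 1, by omega⟩
    have hJ2 : C (d₂ * k2 - 2*v*k1) + C (u * k2) * X
        = C (-2*v) * derivative f + (C d₃ + C b * X) * (derivative (derivative f)) := by
      apply Polynomial.funext; intro l
      simp only [eval_add, eval_mul, eval_C, eval_X]
      linear_combination hD2 l
    have hcoeff2 := congrArg (fun p => Polynomial.coeff p (m1 + 2)) hJ2
    simp only [coeff_add, coeff_C_mul] at hcoeff2
    rw [coeff_C, if_neg (by omega), coeff_X, if_neg (by omega),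
      show m1 + 2 = (m1 + 1) + 1 by omega, coeff_linear_mul] at hcoeff2
    simp only [coeff_derivative] at hcoeff2
    rw [show m1 + 1 + 1 + 1 + 1 = f.natDegree + 1 by omega, htop,
      show m1 + 1 + 1 + 1 = f.natDegree by omega] at hcoeff2
    have hcast2 : ((m1 + 1 + 1 : ℕ) : ℂ) + 1 = (f.natDegree : ℂ) := by
      rw [hm0, hm1]; push_cast; ring
    have hcast3 : ((m1 + 1 : ℕ) : ℂ) + 1 = (f.natDegree : ℂ) - 1 := by
      rw [hm0, hm1]; push_cast; ring
    rw [hcast2, hcast3] at hcoeff2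
    have hAn : f.coeff f.natDegree * (f.natDegree : ℂ) ≠ 0 :=
      mul_ne_zero ha (Nat.cast_ne_zero.mpr (by omega))
    apply mul_right_cancel₀ hAn
    linear_combination hcoeff2
lemma transfer_aux {c e φβ φα v Bp : ℂ} {f k : ℂ[X]}
    (hR : ∀ m : ℂ, c*(φβ + e*m) + (φα + v*m) * f.eval (-m) = (Bp - v*m) * k.eval m)
    (j : ℕ) :
    φα * ((-1)^(j+2) * f.coeff (j+2)) + v * ((-1)^(j+1) * f.coeff (j+1))
      = Bp * k.coeff (j+2) - v * k.coeff (j+1) := by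
  have hpoly : C (c*φβ) + C (c*e) * X + (C φα + C v * X) * (f.comp (-X))
      = (C Bp + C (-v) * X) * k := by
    apply Polynomial.funext; intro m
    simp only [eval_add, eval_mul, eval_C, eval_X, eval_comp, eval_neg]
    linear_combination hR m
  have h := congrArg (fun p => Polynomial.coeff p (j + 2)) hpoly
  simp only [coeff_add, coeff_C_mul] at h
  rw [coeff_C, if_neg (by omega), coeff_X, if_neg (by omega),
    show j + 2 = (j + 1) + 1 by omega, coeff_linear_mul, coeff_linear_mul,
    coeff_comp_neg_X, coeff_comp_neg_X] at h
  rw [show j + 1 + 1 = j + 2 by omega] at h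
  linear_combination h


/-- `B(α,β) = (1/b)(φ(α)β − φ(β)α + b(φ(α) − φ(β)))`. -/
noncomputable def Bc (b : ℂ) {Δ : AddSubgroup ℂ} (φ : Δ →+ ℂ) (α β : Δ) : ℂ :=
  (1 / b) * (φ α * (β : ℂ) - φ β * (α : ℂ) + b * (φ α - φ β))

/-- A 2-cocycle on the Lie conformal algebra `CL(b,φ)`, recorded through its values
`F α β = α_λ(x_α, x_β) ∈ ℂ[λ]` on the free `ℂ[∂]`-generators.  (By conformal
sesquilinearity `α_λ(∂a,b) = −λα_λ(a,b) = −α_λ(a,∂b)`, a 2-cocycle is determined by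
these values, skew-symmetry becomes `α_λ(x_α,x_β) = −α_{−λ}(x_β,x_α)`, and the cocycle
identity `α_λ(a,[b_μ c]) − α_μ(b,[a_λ c]) = α_{λ+μ}([a_λ b],c)` evaluated on generators,
using `[x_α λ x_β] = ((α+b)∂ + (α+β+2b)λ + B(α,β))x_{α+β}`, becomes the displayed
polynomial identity, stated here by evaluation at all complex points `l, m`.) -/
def IsCocycle (Δ : AddSubgroup ℂ) (b : ℂ) (φ : Δ →+ ℂ)
    (F : Δ → Δ → Polynomial ℂ) : Prop :=
  (∀ α β : Δ, ∀ l : ℂ, (F α β).eval l = -((F β α).eval (-l))) ∧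
  (∀ α β γ : Δ, ∀ l m : ℂ,
    (((β : ℂ) + b) * l + ((β : ℂ) + (γ : ℂ) + 2 * b) * m + Bc b φ β γ)
        * (F α (β + γ)).eval l
      - (((α : ℂ) + b) * m + ((α : ℂ) + (γ : ℂ) + 2 * b) * l + Bc b φ α γ)
        * (F β (α + γ)).eval m
    = (-(((α : ℂ) + b)) * (l + m) + ((α : ℂ) + (β : ℂ) + 2 * b) * l + Bc b φ α β)
        * (F (α + β) γ).eval (l + m))

/-- If `3b ∈ Δ` and `φ(3b) = 0`, then every 2-cocycle on `CL(b,φ)` is,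
up to a coboundary, of the form `δ_{α+β,−3b} g(α)` for an additive homomorphism
`g : Δ → ℂ` with `g(3b) = 0`. -/
theorem stmt4 (Δ : AddSubgroup ℂ) (hΔinf : (Δ : Set ℂ).Infinite)
    (b : ℂ) (hb : 2 * b ∉ Δ) (φ : Δ →+ ℂ)
    (h3 : 3 * b ∈ Δ) (hφ3 : φ ⟨3 * b, h3⟩ = 0)
    (F : Δ → Δ → Polynomial ℂ) (hF : IsCocycle Δ b φ F) :
    ∃ g : Δ →+ ℂ, g ⟨3 * b, h3⟩ = 0 ∧
      ∃ Φ : Δ → ℂ, ∀ α β : Δ, ∀ l : ℂ,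
        (F α β).eval l
          = (l * ((α : ℂ) + (β : ℂ) + 2 * b) + Bc b φ α β) * Φ (α + β)
            + (if (α : ℂ) + (β : ℂ) = -(3 * b) then g α else 0) := by
  obtain ⟨hskew, hjac⟩ := hF
  have hb0 : b ≠ 0 := by
    intro h; exact hb (by rw [h, mul_zero]; exact Δ.zero_mem)
  have hmem1 : ∀ α : Δ, (α : ℂ) + b ≠ 0 := by
    intro α h
    apply hb
    have h2 : (-((α : ℂ) + (α : ℂ))) ∈ Δ := Δ.neg_mem (Δ.add_mem α.2 α.2)
    have h3' : -((α : ℂ) + (α : ℂ)) = 2 * b := by linear_combination (-2 : ℂ) * h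
    rwa [h3'] at h2
  have hmem2 : ∀ α : Δ, (α : ℂ) + 2 * b ≠ 0 := by
    intro α h
    apply hb
    have h2 : (-(α : ℂ)) ∈ Δ := Δ.neg_mem α.2
    have h3' : -(α : ℂ) = 2 * b := by linear_combination -h
    rwa [h3'] at h2
  have hφ0 : φ 0 = 0 := map_zero φ
  have hcoe0 : ((0 : Δ) : ℂ) = 0 := rfl
  have hBβ0 : ∀ β : Δ, Bc b φ β 0 = φ β := by
    intro β; unfold Bc; rw [hφ0, hcoe0]; field_simp; ring
  have hB0γ : ∀ γ : Δ, Bc b φ 0 γ = -(φ γ) := by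
    intro γ; unfold Bc; rw [hφ0, hcoe0]; field_simp; ring
  -- the basic scalar relation (R)
  have hR : ∀ α β : Δ, ∀ m : ℂ,
      (F α β).eval 0 * (φ β + ((β : ℂ) + 2 * b) * m)
        + (φ α + ((α : ℂ) + b) * m) * (F α β).eval (-m)
      = (Bc b φ α β - ((α : ℂ) + b) * m) * (F (α + β) 0).eval m := by
    intro α β m
    have hj := hjac α β 0 0 m
    simp only [ZeroMemClass.coe_zero, add_zero, zero_add] at hj
    rw [hBβ0, hBβ0, hskew β α m] at hj
    linear_combination hj
  -- the relation (U)
  have hU : ∀ α γ : Δ, ∀ l m : ℂ,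
      (b * l + ((γ : ℂ) + 2 * b) * m + (-(φ γ))) * (F α γ).eval l
        + (((α : ℂ) + b) * m + ((α : ℂ) + (γ : ℂ) + 2 * b) * l + Bc b φ α γ)
            * (F (α + γ) 0).eval (-m)
      = (b * l - ((α : ℂ) + b) * m + φ α) * (F α γ).eval (l + m) := by
    intro α γ l m
    have hj := hjac α 0 γ l m
    simp only [ZeroMemClass.coe_zero, add_zero, zero_add] at hj
    rw [hB0γ, hBβ0, hskew 0 (α + γ) m] at hj
    linear_combination hj
  -- degree bound
  have hdeg : ∀ α γ : Δ, (F α γ).natDegree ≤ 1 := by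
    by_contra hcon
    push_neg at hcon
    obtain ⟨α, γ, hn⟩ := hcon
    have hn2 : 2 ≤ (F α γ).natDegree := hn
    have hda := degree_aux (fun l m => hU α γ l m) hn2
    set n := (F α γ).natDegree with hndef
    have hsum1 : ((γ : ℂ) + 2 * b) + ((α : ℂ) + b) = b * n := hda.1
    by_cases hn3 : 3 ≤ n
    · -- n ≥ 3
      have h2v : 2 * ((α : ℂ) + b) = b * ((n : ℂ) - 1) := hda.2 hn3
      have htr := transfer_aux (hR α γ) (n - 1)
      rw [show n - 1 + 2 = n + 1 by omega, show n - 1 + 1 = n by omega] at htr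
      have hf0 : F α γ ≠ 0 := by
        intro h; rw [h, natDegree_zero] at hndef; omega
      have hfa : (F α γ).coeff n ≠ 0 := leadingCoeff_ne_zero.mpr hf0
      rw [coeff_eq_zero_of_natDegree_lt (show (F α γ).natDegree < n + 1 by omega)] at htr
      have hk_ne : (F (α + γ) 0).coeff (n + 1) ≠ 0 ∨ (F (α + γ) 0).coeff n ≠ 0 := by
        by_contra hcc
        push_neg at hcc
        rw [hcc.1, hcc.2] at htr
        have hz : ((α : ℂ) + b) * ((-1) ^ n * (F α γ).coeff n) = 0 := by linear_combination htr
        exact (mul_ne_zero (hmem1 α)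
          (mul_ne_zero (pow_ne_zero _ (by norm_num)) hfa)) hz
      have hNk : n ≤ (F (α + γ) 0).natDegree := by
        rcases hk_ne with h | h
        · exact le_trans (by omega) (le_natDegree_of_ne_zero h)
        · exact le_natDegree_of_ne_zero h
      set N := (F (α + γ) 0).natDegree with hNdef
      have hkne : F (α + γ) 0 ≠ 0 := by
        intro h; rw [h, natDegree_zero] at hNdef; omega
      have hkN : (F (α + γ) 0).coeff N ≠ 0 := leadingCoeff_ne_zero.mpr hkne
      obtain ⟨a', ha'mem, ha'ne⟩ := hΔinf.exists_notMem_finite (Set.finite_singleton (α : ℂ))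
      set α' : Δ := ⟨a', ha'mem⟩ with hα'def
      set γ' : Δ := α + γ - α' with hγ'def
      have hsum : α' + γ' = α + γ := by rw [hγ'def, add_comm]; exact sub_add_cancel _ _
      have htr2 := transfer_aux (hR α' γ') (N - 1)
      rw [hsum, show N - 1 + 2 = N + 1 by omega, show N - 1 + 1 = N by omega,
        coeff_eq_zero_of_natDegree_lt (show (F (α + γ) 0).natDegree < N + 1 by omega)] at htr2
      have hf'_ne : (F α' γ').coeff (N + 1) ≠ 0 ∨ (F α' γ').coeff N ≠ 0 := by
        by_contra hcc
        push_neg at hcc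
        rw [hcc.1, hcc.2] at htr2
        have hz : ((α' : ℂ) + b) * (F (α + γ) 0).coeff N = 0 := by linear_combination htr2
        exact (mul_ne_zero (hmem1 α') hkN) hz
      have hn' : N ≤ (F α' γ').natDegree := by
        rcases hf'_ne with h | h
        · exact le_trans (by omega) (le_natDegree_of_ne_zero h)
        · exact le_natDegree_of_ne_zero h
      have hn'2 : 2 ≤ (F α' γ').natDegree := by omega
      have hda' := degree_aux (fun l m => hU α' γ' l m) hn'2
      set n' := (F α' γ').natDegree with hn'def
      have hsum1' : ((γ' : ℂ) + 2 * b) + ((α' : ℂ) + b) = b * n' := hda'.1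
      have h2v' : 2 * ((α' : ℂ) + b) = b * ((n' : ℂ) - 1) := hda'.2 (by omega)
      have hcoesum : (α' : ℂ) + (γ' : ℂ) = (α : ℂ) + (γ : ℂ) := by
        have h := congrArg (fun x : Δ => (x : ℂ)) hsum
        push_cast at h
        exact h
      have hnn' : (n : ℂ) = (n' : ℂ) := by
        apply mul_left_cancel₀ hb0
        linear_combination hsum1' - hsum1 - hcoesum
      have heqα : (α : ℂ) = a' := by
        have e : ((α' : Δ) : ℂ) = a' := rfl
        rw [← e]
        linear_combination (h2v - h2v') / 2 + (b / 2) * hnn'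
      exact ha'ne (by rw [Set.mem_singleton_iff, ← heqα])
    · -- n = 2 : contradiction with -b ∉ Δ
      have hceq : (α : ℂ) + (γ : ℂ) + b = 0 := by
        have hc : (n : ℂ) = 2 := by rw [show n = 2 by omega]; norm_num
        linear_combination hsum1 + b * hc
      apply hmem1 (α + γ)
      push_cast
      linear_combination hceq
  -- Phase 2: all polynomials are (at most) linear
  obtain ⟨p, hp⟩ : ∃ p : Δ → Δ → ℂ, ∀ α β, p α β = (F α β).coeff 1 := ⟨_, fun _ _ => rfl⟩
  obtain ⟨q, hq⟩ : ∃ q : Δ → Δ → ℂ, ∀ α β, q α β = (F α β).coeff 0 := ⟨_, fun _ _ => rfl⟩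
  have heval : ∀ α β : Δ, ∀ l : ℂ, (F α β).eval l = q α β + p α β * l := by
    intro α β l
    rw [hq α β, hp α β,
      eval_eq_sum_range' (show (F α β).natDegree < 2 from lt_of_le_of_lt (hdeg α β) one_lt_two),
      Finset.sum_range_succ, Finset.sum_range_succ, Finset.sum_range_zero]
    ring
  have hqskew : ∀ α β : Δ, q α β = -(q β α) := by
    intro α β
    have h := hskew α β 0
    rw [heval, heval] at h
    linear_combination h
  have hRq : ∀ α β : Δ, ∀ m : ℂ,
      (q α β) * (φ β + ((β : ℂ) + 2 * b) * m)
        + (φ α + ((α : ℂ) + b) * m) * (q α β + p α β * (-m))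
      = (Bc b φ α β - ((α : ℂ) + b) * m) * (q (α + β) 0 + p (α + β) 0 * m) := by
    intro α β m
    have h := hR α β m
    rw [heval, heval, heval] at h
    linear_combination h
  have hL1 : ∀ α β : Δ, p α β = p (α + β) 0 := by
    intro α β
    have h1 := hRq α β 1
    have h2 := hRq α β (-1)
    have h0 := hRq α β 0
    apply mul_left_cancel₀ (hmem1 α)
    linear_combination (2 * h0 - h1 - h2) / 2
  have hL3 : ∀ α β : Δ, ((α : ℂ) + (β : ℂ) + 3 * b) * q α β
      = (Bc b φ α β + φ α) * p (α + β) 0 - ((α : ℂ) + b) * q (α + β) 0 := by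
    intro α β
    have h1 := hRq α β 1
    have h2 := hRq α β (-1)
    have hl1 := hL1 α β
    linear_combination (h1 - h2) / 2 + (φ α) * hl1
  have hL2 : ∀ γ : Δ, ((γ : ℂ) + 2 * b) * q γ 0 = φ γ * p γ 0 := by
    intro γ
    have h := hL3 γ 0
    simp only [add_zero, ZeroMemClass.coe_zero, hφ0] at h
    rw [hBβ0] at h
    linear_combination h / 2
  obtain ⟨Φ, hΦ⟩ : ∃ Φ : Δ → ℂ, ∀ γ, Φ γ = p γ 0 / ((γ : ℂ) + 2 * b) := ⟨_, fun _ => rfl⟩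
  have hPΦ : ∀ γ : Δ, ((γ : ℂ) + 2 * b) * Φ γ = p γ 0 := by
    intro γ; rw [hΦ]; exact mul_div_cancel₀ _ (hmem2 γ)
  have hQΦ : ∀ γ : Δ, q γ 0 = φ γ * Φ γ := by
    intro γ
    apply mul_left_cancel₀ (hmem2 γ)
    linear_combination hL2 γ - φ γ * hPΦ γ
  have hbB : ∀ x y : Δ, b * Bc b φ x y = φ x * ((y : ℂ) + b) - φ y * ((x : ℂ) + b) := by
    intro x y; unfold Bc; field_simp; ring
  have hq_gen : ∀ α β : Δ, ((α : ℂ) + (β : ℂ) + 3 * b) ≠ 0 →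
      q α β = Bc b φ α β * Φ (α + β) := by
    intro α β hne
    have e1 := hL3 α β
    have e2 := hQΦ (α + β)
    have e3 := hPΦ (α + β)
    have hadd : φ (α + β) = φ α + φ β := map_add φ α β
    have hco : ((α + β : Δ) : ℂ) = (α : ℂ) + (β : ℂ) := by push_cast; ring
    rw [e2, hadd] at e1
    rw [← e3, hco] at e1
    apply mul_left_cancel₀ hne
    apply mul_left_cancel₀ hb0
    linear_combination b * e1 - b * Φ (α + β) * hbB α β
  -- the element T = -3b of Δ
  set T : Δ := -(⟨3 * b, h3⟩ : Δ) with hTdef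
  have hTc : (T : ℂ) = -(3 * b) := by rw [hTdef]; simp
  have hφT : φ T = 0 := by rw [hTdef, map_neg, hφ3, neg_zero]
  have hφs : ∀ x : Δ, φ (T - x) = -φ x := by
    intro x; rw [map_sub, hφT]; ring
  have hcs : ∀ x : Δ, ((T - x : Δ) : ℂ) = -(3 * b) - (x : ℂ) := by
    intro x; push_cast [hTc]; ring
  obtain ⟨g0, hg0eq⟩ : ∃ g0 : Δ → ℂ, ∀ α, g0 α = q α (T - α) - Bc b φ α (T - α) * Φ T :=
    ⟨_, fun _ => rfl⟩
  have hpT : p T 0 = -b * Φ T := by rw [← hPΦ T, hTc]; ring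
  have hgadd : ∀ α β : Δ, g0 (α + β) = g0 α + g0 β := by
    intro α β
    set γ : Δ := T - α - β with hγdef
    have e1 : β + γ = T - α := by rw [hγdef]; abel
    have e2 : α + γ = T - β := by rw [hγdef]; abel
    have e3 : γ = T - (α + β) := by rw [hγdef]; abel
    have hj1 := hjac α β γ 1 0
    have hj2 := hjac α β γ (-1) 0
    rw [e1, e2, e3] at hj1 hj2
    simp only [heval] at hj1 hj2
    have E : ((β : ℂ) + b) * q α (T - α) + Bc b φ β (T - (α + β)) * p α (T - α)
        - ((α : ℂ) + ((T - (α + β) : Δ) : ℂ) + 2 * b) * q β (T - β)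
        = ((β : ℂ) + b) * q (α + β) (T - (α + β)) + Bc b φ α β * p (α + β) (T - (α + β)) := by
      linear_combination (hj1 - hj2) / 2
    rw [hL1 α (T - α), hL1 (α + β) (T - (α + β)),
      show α + (T - α) = T by abel, show (α + β) + (T - (α + β)) = T by abel, hpT] at E
    have hco2 : ((T - (α + β) : Δ) : ℂ) = -(3 * b) - ((α : ℂ) + (β : ℂ)) := by
      rw [hcs (α + β)]; push_cast; ring
    have hbr : ((β : ℂ) + b) * (Bc b φ (α + β) (T - (α + β)) - Bc b φ α (T - α)
          - Bc b φ β (T - β))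
        = b * (Bc b φ α β - Bc b φ β (T - (α + β))) := by
      unfold Bc
      rw [hφs, hφs, hφs, hcs, hcs, hcs, map_add φ α β,
        show ((α + β : Δ) : ℂ) = (α : ℂ) + (β : ℂ) by push_cast; ring]
      field_simp
      ring
    rw [hg0eq, hg0eq, hg0eq]
    apply mul_left_cancel₀ (hmem1 β)
    linear_combination -E - q β (T - β) * hco2 - Φ T * hbr
  have hBskew : ∀ x y : Δ, Bc b φ x y + Bc b φ y x = 0 := by
    intro x y; unfold Bc; ring
  have hg0skew : ∀ α : Δ, g0 α + g0 (T - α) = 0 := by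
    intro α
    have h := hqskew α (T - α)
    have hTT : T - (T - α) = α := by abel
    rw [hg0eq, hg0eq, hTT]
    linear_combination h - Φ T * hBskew α (T - α)
  have hg00 : g0 0 = 0 := by
    have h := hgadd 0 0
    rw [add_zero] at h
    linear_combination -h
  have hgT : g0 T = 0 := by
    have h := hg0skew T
    rw [sub_self] at h
    linear_combination h - hg00
  have hg3b : g0 ⟨3 * b, h3⟩ = 0 := by
    have hneg : (⟨3 * b, h3⟩ : Δ) = -T := by rw [hTdef, neg_neg]
    have h := hgadd T (-T)
    rw [show T + -T = 0 by abel, hg00, hgT] at h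
    rw [hneg]
    linear_combination -h
  refine ⟨AddMonoidHom.mk' g0 hgadd, hg3b, Φ, ?_⟩
  intro α β l
  rw [heval]
  by_cases hc : (α : ℂ) + (β : ℂ) = -(3 * b)
  · rw [if_pos hc]
    have hβ : β = T - α := by
      apply Subtype.ext
      rw [hcs α]
      linear_combination hc
    show q α β + p α β * l
      = (l * ((α : ℂ) + (β : ℂ) + 2 * b) + Bc b φ α β) * Φ (α + β) + g0 α
    rw [hβ, hL1 α (T - α), show α + (T - α) = T by abel, hpT, hg0eq, hcs α]
    ring
  · rw [if_neg hc]
    have hne : (α : ℂ) + (β : ℂ) + 3 * b ≠ 0 := fun h => hc (by linear_combination h)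
    have hp2 : p α β = ((α : ℂ) + (β : ℂ) + 2 * b) * Φ (α + β) := by
      rw [hL1 α β, ← hPΦ (α + β)]
      push_cast
      ring
    show q α β + p α β * l
      = (l * ((α : ℂ) + (β : ℂ) + 2 * b) + Bc b φ α β) * Φ (α + β) + 0
    rw [hq_gen α β hne, hp2]
    ring
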